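/- Let μ and ν be finite positive Borel measures on ℝ with the same total mass, and suppose only that μ ≤ ρ₀·λ for a constant ρ₀ > 0, where λ is Lebesgue measure on ℝ (no upper density bound is assumed on ν). Then ‖ν − μ‖_{Ḣ⁻¹} ≤ 2 ρ₀^{1/2} · W₂(μ, ν). -/

import Mathlib

open MeasureTheory ENNReal

section Aux
open Set
section CS
variable {α : Type*} [MeasurableSpace α]

lemma my_int_mul (m : Measure α) (a b : α → ℝ)
    (ha : AEStronglyMeasurable a m) (hb : AEStronglyMeasurable b m)
    (Ia : Integrable (fun x => a x ^ 2) m) (Ib : Integrable (fun x => b x ^ 2) m) :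
    Integrable (fun x => a x * b x) m := by
  have hma : MemLp a 2 m := (memLp_two_iff_integrable_sq ha).2 Ia
  have hmb : MemLp b 2 m := (memLp_two_iff_integrable_sq hb).2 Ib
  have h := L2.integrable_inner (𝕜 := ℝ) (hma.toLp a) (hmb.toLp b)
  have heq : (fun x => (hma.toLp a : α →₂[m] ℝ) x * (hmb.toLp b : α →₂[m] ℝ) x)
      =ᵐ[m] fun x => a x * b x := by
    filter_upwards [hma.coeFn_toLp, hmb.coeFn_toLp] with x h1 h2
    rw [h1, h2]
  exact (integrable_congr heq).1 (h.congr (Filter.Eventually.of_forall fun x => by simp [mul_comm]))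

lemma my_cs (m : Measure α) (a b : α → ℝ)
    (ha : AEStronglyMeasurable a m) (hb : AEStronglyMeasurable b m)
    (Ia : Integrable (fun x => a x ^ 2) m) (Ib : Integrable (fun x => b x ^ 2) m) :
    |∫ x, a x * b x ∂m| ≤ Real.sqrt (∫ x, a x ^ 2 ∂m) * Real.sqrt (∫ x, b x ^ 2 ∂m) := by
  have hma : MemLp a 2 m := (memLp_two_iff_integrable_sq ha).2 Ia
  have hmb : MemLp b 2 m := (memLp_two_iff_integrable_sq hb).2 Ib
  set fa : α →₂[m] ℝ := hma.toLp a with hfa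
  set fb : α →₂[m] ℝ := hmb.toLp b with hfb
  have hinner : @inner ℝ _ _ fa fb = ∫ x, a x * b x ∂m := by
    rw [L2.inner_def]
    refine integral_congr_ae ?_
    filter_upwards [hma.coeFn_toLp, hmb.coeFn_toLp] with x h1 h2
    rw [h1, h2]; simp [mul_comm]
  have hna : ∫ x, a x ^ 2 ∂m = ‖fa‖ ^ 2 := by
    rw [← real_inner_self_eq_norm_sq, L2.inner_def]
    refine integral_congr_ae ?_
    filter_upwards [hma.coeFn_toLp] with x h1
    rw [h1]; simp [sq]
  have hnb : ∫ x, b x ^ 2 ∂m = ‖fb‖ ^ 2 := by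
    rw [← real_inner_self_eq_norm_sq, L2.inner_def]
    refine integral_congr_ae ?_
    filter_upwards [hmb.coeFn_toLp] with x h1
    rw [h1]; simp [sq]
  rw [← hinner, hna, hnb, Real.sqrt_sq (norm_nonneg _), Real.sqrt_sq (norm_nonneg _)]
  exact abs_real_inner_le_norm fa fb

end CS


noncomputable def Gfun (μ ν : Measure ℝ) (x : ℝ) : ℝ :=
  (ν (Ici x)).toReal - (μ (Ici x)).toReal

noncomputable def kfun (p : ℝ × ℝ) (u : ℝ) : ℝ :=
  (Ioc p.1 p.2).indicator (fun _ => (1:ℝ)) u - (Ioc p.2 p.1).indicator (fun _ => (1:ℝ)) u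

lemma kfun_eq (p : ℝ × ℝ) (u : ℝ) :
    kfun p u = (if u ≤ p.2 then (1:ℝ) else 0) - (if u ≤ p.1 then (1:ℝ) else 0) := by
  unfold kfun
  by_cases h1 : u ≤ p.2 <;> by_cases h2 : u ≤ p.1 <;>
    simp [Set.indicator_apply, Set.mem_Ioc, h1, h2] <;>
    intro h <;> linarith

lemma abs_kfun_le (p : ℝ × ℝ) (u : ℝ) : |kfun p u| ≤ 1 := by
  rw [kfun_eq]; split_ifs <;> norm_num

lemma kfun_eq_zero (p : ℝ × ℝ) (u : ℝ) (h : u ∉ Set.uIoc p.1 p.2) : kfun p u = 0 := by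
  rw [Set.mem_uIoc] at h
  push_neg at h
  rw [kfun_eq]
  obtain ⟨h1, h2⟩ := h
  by_cases ha : u ≤ p.2 <;> by_cases hb : u ≤ p.1 <;> simp [ha, hb] <;> push_neg at * <;> first | linarith [h1 hb] | linarith [h2 ha]

lemma abs_kfun_le_indicator (p : ℝ × ℝ) (u : ℝ) :
    |kfun p u| ≤ (Set.uIoc p.1 p.2).indicator (fun _ => (1:ℝ)) u := by
  by_cases h : u ∈ Set.uIoc p.1 p.2
  · rw [Set.indicator_of_mem h]; exact abs_kfun_le p u
  · rw [Set.indicator_of_notMem h, kfun_eq_zero p u h, abs_zero]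

lemma sq_kfun_le_indicator (p : ℝ × ℝ) (u : ℝ) :
    kfun p u ^ 2 ≤ (Set.uIoc p.1 p.2).indicator (fun _ => (1:ℝ)) u := by
  have h1 := abs_kfun_le_indicator p u
  have h2 := abs_kfun_le p u
  have h3 : kfun p u ^ 2 = |kfun p u| * |kfun p u| := by
    rw [← abs_mul, ← sq, abs_sq]
  rw [h3]
  calc |kfun p u| * |kfun p u| ≤ 1 * (Set.uIoc p.1 p.2).indicator (fun _ => (1:ℝ)) u := by
        apply mul_le_mul h2 h1 (abs_nonneg _) zero_le_one
    _ = _ := one_mul _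

lemma measurable_kfun : Measurable (Function.uncurry kfun) := by
  have h1 : Measurable fun q : (ℝ × ℝ) × ℝ =>
      (Ioc q.1.1 q.1.2).indicator (fun _ => (1:ℝ)) q.2 := by
    have : (fun q : (ℝ × ℝ) × ℝ => (Ioc q.1.1 q.1.2).indicator (fun _ => (1:ℝ)) q.2)
        = Set.indicator {q : (ℝ × ℝ) × ℝ | q.1.1 < q.2 ∧ q.2 ≤ q.1.2} (fun _ => (1:ℝ)) := by
      funext q
      by_cases h : q.1.1 < q.2 ∧ q.2 ≤ q.1.2 <;>
        simp [Set.indicator_apply, Set.mem_Ioc, h]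
    rw [this]
    exact (measurable_const.indicator
      ((measurableSet_lt (measurable_fst.fst) measurable_snd).inter
        (measurableSet_le measurable_snd measurable_fst.snd)))
  have h2 : Measurable fun q : (ℝ × ℝ) × ℝ =>
      (Ioc q.1.2 q.1.1).indicator (fun _ => (1:ℝ)) q.2 := by
    have : (fun q : (ℝ × ℝ) × ℝ => (Ioc q.1.2 q.1.1).indicator (fun _ => (1:ℝ)) q.2)
        = Set.indicator {q : (ℝ × ℝ) × ℝ | q.1.2 < q.2 ∧ q.2 ≤ q.1.1} (fun _ => (1:ℝ)) := by
      funext q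
      by_cases h : q.1.2 < q.2 ∧ q.2 ≤ q.1.1 <;>
        simp [Set.indicator_apply, Set.mem_Ioc, h]
    rw [this]
    exact (measurable_const.indicator
      ((measurableSet_lt (measurable_fst.snd) measurable_snd).inter
        (measurableSet_le measurable_snd measurable_fst.fst)))
  exact h1.sub h2

lemma measurable_Gfun (μ ν : Measure ℝ) [IsFiniteMeasure μ] [IsFiniteMeasure ν] :
    Measurable (Gfun μ ν) := by
  have h : ∀ (m : Measure ℝ) [IsFiniteMeasure m], Measurable fun x => (m (Ici x)).toReal := by
    intro m _
    have : Antitone fun x => (m (Ici x)).toReal := by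
      intro x y hxy
      exact ENNReal.toReal_mono (measure_ne_top m _) (measure_mono (Ici_subset_Ici.2 hxy))
    exact this.measurable
  exact (h ν).sub (h μ)

lemma abs_Gfun_le (μ ν : Measure ℝ) [IsFiniteMeasure μ] [IsFiniteMeasure ν] (x : ℝ) :
    |Gfun μ ν x| ≤ (ν Set.univ).toReal + (μ Set.univ).toReal := by
  unfold Gfun
  refine (abs_sub _ _).trans ?_
  gcongr
  · rw [abs_of_nonneg ENNReal.toReal_nonneg]
    exact ENNReal.toReal_mono (measure_ne_top ν _) (measure_mono (subset_univ _))
  · rw [abs_of_nonneg ENNReal.toReal_nonneg]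
    exact ENNReal.toReal_mono (measure_ne_top μ _) (measure_mono (subset_univ _))

section Coupling
variable {μ ν : Measure ℝ} [IsFiniteMeasure μ] [IsFiniteMeasure ν]
  {π : Measure (ℝ × ℝ)} (hπ1 : π.map Prod.fst = μ) (hπ2 : π.map Prod.snd = ν)

include hπ1 in
lemma coupling_finite : IsFiniteMeasure π := by
  constructor
  have : π Set.univ = (π.map Prod.fst) Set.univ := by
    rw [Measure.map_apply measurable_fst MeasurableSet.univ]; rfl
  rw [this, hπ1]
  exact measure_lt_top μ _

include hπ1 hπ2 in
lemma Gfun_eq_integral (u : ℝ) : Gfun μ ν u = ∫ p, kfun p u ∂π := by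
  haveI := coupling_finite hπ1
  have e1 : ∀ p : ℝ × ℝ, kfun p u
      = {p : ℝ × ℝ | u ≤ p.2}.indicator (fun _ => (1:ℝ)) p
        - {p : ℝ × ℝ | u ≤ p.1}.indicator (fun _ => (1:ℝ)) p := by
    intro p
    rw [kfun_eq]
    by_cases h1 : u ≤ p.2 <;> by_cases h2 : u ≤ p.1 <;>
      simp [Set.indicator_apply, h1, h2]
  have hs2 : MeasurableSet {p : ℝ × ℝ | u ≤ p.2} := measurableSet_le measurable_const measurable_snd
  have hs1 : MeasurableSet {p : ℝ × ℝ | u ≤ p.1} := measurableSet_le measurable_const measurable_fst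
  have i2 : Integrable ({p : ℝ × ℝ | u ≤ p.2}.indicator (fun _ => (1:ℝ))) π :=
    (integrable_const (1:ℝ)).indicator hs2
  have i1 : Integrable ({p : ℝ × ℝ | u ≤ p.1}.indicator (fun _ => (1:ℝ))) π :=
    (integrable_const (1:ℝ)).indicator hs1
  rw [show (fun p : ℝ × ℝ => kfun p u) = _ from funext e1, integral_sub i2 i1,
    integral_indicator_const _ hs2, integral_indicator_const _ hs1]
  have m2 : π {p : ℝ × ℝ | u ≤ p.2} = ν (Ici u) := by
    rw [← hπ2, Measure.map_apply measurable_snd measurableSet_Ici]; rfl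
  have m1 : π {p : ℝ × ℝ | u ≤ p.1} = μ (Ici u) := by
    rw [← hπ1, Measure.map_apply measurable_fst measurableSet_Ici]; rfl
  rw [measureReal_def, measureReal_def, m1, m2]
  unfold Gfun
  simp

variable (hcost : ∫⁻ p, ENNReal.ofReal (|p.1 - p.2| ^ 2) ∂π ≠ ⊤)

include hcost in
lemma integrable_sq_coupling : Integrable (fun p : ℝ × ℝ => (p.2 - p.1) ^ 2) π := by
  have hmeas : AEMeasurable (fun p : ℝ × ℝ => ENNReal.ofReal (|p.1 - p.2| ^ 2)) π :=
    (ENNReal.measurable_ofReal.comp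
      ((((measurable_fst.sub measurable_snd).abs).pow_const 2))).aemeasurable
  have h := integrable_toReal_of_lintegral_ne_top hmeas hcost
  refine h.congr (Filter.Eventually.of_forall fun p => ?_)
  simp only
  rw [ENNReal.toReal_ofReal (by positivity), sq_abs]
  ring

include hπ1 hcost in
lemma integrable_abs_coupling : Integrable (fun p : ℝ × ℝ => |p.2 - p.1|) π := by
  haveI := coupling_finite hπ1
  refine Integrable.mono' ((integrable_const (1:ℝ)).add (integrable_sq_coupling hcost))
    ((measurable_snd.sub measurable_fst).abs).aestronglyMeasurable
    (Filter.Eventually.of_forall fun p => ?_)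
  simp only [Pi.add_apply]
  rw [Real.norm_eq_abs, abs_abs]
  nlinarith [sq_nonneg (|p.2 - p.1| - 1), abs_nonneg (p.2 - p.1), sq_abs (p.2 - p.1)]

include hπ1 hcost in
lemma integrable_sqrt_coupling : Integrable (fun p : ℝ × ℝ => Real.sqrt |p.2 - p.1|) π := by
  haveI := coupling_finite hπ1
  refine Integrable.mono' ((integrable_const (1:ℝ)).add (integrable_sq_coupling hcost))
    (((measurable_snd.sub measurable_fst).abs).sqrt).aestronglyMeasurable
    (Filter.Eventually.of_forall fun p => ?_)
  simp only [Pi.add_apply]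
  rw [Real.norm_eq_abs, abs_of_nonneg (Real.sqrt_nonneg _)]
  set s := Real.sqrt |p.2 - p.1| with hs
  have hs0 : 0 ≤ s := Real.sqrt_nonneg _
  have hs2 : s ^ 2 = |p.2 - p.1| := Real.sq_sqrt (abs_nonneg _)
  have h4 : s ^ 4 = (p.2 - p.1) ^ 2 := by
    have := sq_abs (p.2 - p.1)
    nlinarith [hs2]
  nlinarith [sq_nonneg (s - 1), sq_nonneg (s ^ 2 - 1), sq_nonneg s]

end Coupling

lemma bdd_intervalIntegrable {g : ℝ → ℝ} (hg : Measurable g) (M : ℝ)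
    (hM : ∀ x, |g x| ≤ M) (a b : ℝ) : IntervalIntegrable g volume a b := by
  rw [intervalIntegrable_iff]
  haveI : IsFiniteMeasure (volume.restrict (Set.uIoc a b)) := by
    constructor
    rw [Measure.restrict_apply_univ, Set.uIoc]
    rw [Real.volume_Ioc]
    exact ENNReal.ofReal_lt_top
  exact Integrable.mono' (integrable_const M) hg.aestronglyMeasurable
    (Filter.Eventually.of_forall fun x => hM x)

section OS
variable {μ ν : Measure ℝ} [IsFiniteMeasure μ] [IsFiniteMeasure ν]
  {ρ₀ : ℝ} (hρ₀ : 0 < ρ₀) (hμ : μ ≤ ENNReal.ofReal ρ₀ • volume)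

include hρ₀ hμ in
lemma Gfun_one_sided (a b : ℝ) (hab : a ≤ b) :
    Gfun μ ν b - Gfun μ ν a ≤ ρ₀ * (b - a) := by
  unfold Gfun
  have hν : (ν (Ici b)).toReal ≤ (ν (Ici a)).toReal :=
    ENNReal.toReal_mono (measure_ne_top ν _) (measure_mono (Ici_subset_Ici.2 hab))
  have hμ2 : (μ (Ici a)).toReal - (μ (Ici b)).toReal ≤ ρ₀ * (b - a) := by
    have hsub : Ici a = Ico a b ∪ Ici b := by
      rw [Ico_union_Ici_eq_Ici hab]
    have hdisj : Disjoint (Ico a b) (Ici b) := by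
      apply Set.disjoint_left.2
      intro x hx1 hx2
      exact absurd hx2 (not_le.2 hx1.2)
    have hsplit : μ (Ici a) = μ (Ico a b) + μ (Ici b) := by
      rw [hsub, measure_union hdisj measurableSet_Ici]
    have hIco : μ (Ico a b) ≤ ENNReal.ofReal (ρ₀ * (b - a)) := by
      calc μ (Ico a b) ≤ (ENNReal.ofReal ρ₀ • volume) (Ico a b) := hμ _
        _ = ENNReal.ofReal ρ₀ * ENNReal.ofReal (b - a) := by
            rw [Measure.smul_apply, smul_eq_mul, Real.volume_Ico]
        _ = ENNReal.ofReal (ρ₀ * (b - a)) := by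
            rw [ENNReal.ofReal_mul hρ₀.le]
    have h1 : (μ (Ici a)).toReal = (μ (Ico a b)).toReal + (μ (Ici b)).toReal := by
      rw [hsplit, ENNReal.toReal_add (measure_ne_top μ _) (measure_ne_top μ _)]
    have h2 : (μ (Ico a b)).toReal ≤ ρ₀ * (b - a) := by
      refine (ENNReal.toReal_mono ENNReal.ofReal_ne_top hIco).trans_eq ?_
      rw [ENNReal.toReal_ofReal (by nlinarith)]
    linarith
  linarith

lemma lin_int (a b c d : ℝ) :
    ∫ u in a..b, (c + d * u) = c * (b - a) + d * ((b ^ 2 - a ^ 2) / 2) := by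
  have h1 : IntervalIntegrable (fun _ : ℝ => c) volume a b := intervalIntegrable_const
  have h2 : IntervalIntegrable (fun u : ℝ => d * u) volume a b :=
    (continuous_const.mul continuous_id').intervalIntegrable a b
  rw [intervalIntegral.integral_add h1 h2, intervalIntegral.integral_const,
    intervalIntegral.integral_const_mul, integral_id]
  simp only [smul_eq_mul]
  ring

include hρ₀ hμ in
lemma intervalIntegral_Gfun_le (z y : ℝ) :
    ∫ u in z..y, Gfun μ ν u ≤ Gfun μ ν z * (y - z) + ρ₀ / 2 * (y - z) ^ 2 := by
  set G := Gfun μ ν with hG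
  set M := (ν Set.univ).toReal + (μ Set.univ).toReal with hM
  have hGb : ∀ x, |G x| ≤ M := abs_Gfun_le μ ν
  have hGm : Measurable G := measurable_Gfun μ ν
  have hint : ∀ a b : ℝ, IntervalIntegrable G volume a b :=
    bdd_intervalIntegrable hGm M hGb
  rcases le_or_gt z y with hzy | hzy
  · have hc1 : Continuous fun u : ℝ => (G z - ρ₀ * z) + ρ₀ * u :=
      continuous_const.add (continuous_const.mul continuous_id')
    have hmono : ∫ u in z..y, G u ≤ ∫ u in z..y, ((G z - ρ₀ * z) + ρ₀ * u) := by
      refine intervalIntegral.integral_mono_on hzy (hint z y)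
        (hc1.intervalIntegrable z y) ?_
      intro u hu
      have := Gfun_one_sided (μ := μ) (ν := ν) hρ₀ hμ z u hu.1
      rw [← hG] at this
      linarith
    calc ∫ u in z..y, G u ≤ _ := hmono
      _ = _ := lin_int z y _ _
      _ ≤ G z * (y - z) + ρ₀ / 2 * (y - z) ^ 2 := by nlinarith [sq_nonneg (y - z)]
  · have hswap : ∫ u in z..y, G u = -∫ u in y..z, G u := by
      rw [intervalIntegral.integral_symm]
    have hc1 : Continuous fun u : ℝ => (G z - ρ₀ * z) + ρ₀ * u :=
      continuous_const.add (continuous_const.mul continuous_id')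
    have hmono : ∫ u in y..z, ((G z - ρ₀ * z) + ρ₀ * u) ≤ ∫ u in y..z, G u := by
      refine intervalIntegral.integral_mono_on hzy.le
        (hc1.intervalIntegrable y z) (hint y z) ?_
      intro u hu
      have := Gfun_one_sided (μ := μ) (ν := ν) hρ₀ hμ u z hu.2
      rw [← hG] at this
      linarith
    rw [lin_int y z _ _] at hmono
    rw [hswap]
    nlinarith [hmono, sq_nonneg (z - y)]

end OS

section Swap
variable {μ ν : Measure ℝ} [IsFiniteMeasure μ] [IsFiniteMeasure ν]
  {π : Measure (ℝ × ℝ)} (hπ1 : π.map Prod.fst = μ) (hπ2 : π.map Prod.snd = ν)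
  (hcost : ∫⁻ p, ENNReal.ofReal (|p.1 - p.2| ^ 2) ∂π ≠ ⊤)
  {g : ℝ → ℝ} (hgm : Measurable g) (hg2 : Integrable (fun u => g u ^ 2) volume)

lemma measurable_kfun_slice (p : ℝ × ℝ) : Measurable (kfun p) := by
  exact (measurable_const.indicator measurableSet_Ioc).sub
    (measurable_const.indicator measurableSet_Ioc)

lemma finite_restrict_uIoc (a b : ℝ) : IsFiniteMeasure (volume.restrict (Set.uIoc a b)) := by
  constructor
  rw [Measure.restrict_apply_univ, Set.uIoc, Real.volume_Ioc]
  exact ENNReal.ofReal_lt_top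

lemma volume_uIoc' (a b : ℝ) : volume (Set.uIoc a b) = ENNReal.ofReal |b - a| := by
  rw [Set.uIoc, Real.volume_Ioc]
  congr 1
  rw [max_sub_min_eq_abs]

include hg2 hgm in
lemma L2_integrableOn_Ioc (a b : ℝ) : IntegrableOn g (Set.Ioc a b) volume := by
  have hgl2 : MemLp g 2 volume := (memLp_two_iff_integrable_sq hgm.aestronglyMeasurable).2 hg2
  haveI : IsFiniteMeasure (volume.restrict (Set.Ioc a b)) := by
    constructor
    rw [Measure.restrict_apply_univ, Real.volume_Ioc]
    exact ENNReal.ofReal_lt_top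
  exact (hgl2.restrict _).integrable one_le_two

include hg2 hgm in
lemma slice_integrable (p : ℝ × ℝ) : Integrable (fun u => g u * kfun p u) volume := by
  have h : (fun u => g u * kfun p u)
      = fun u => (Set.Ioc p.1 p.2).indicator g u - (Set.Ioc p.2 p.1).indicator g u := by
    funext u
    unfold kfun
    by_cases h1 : u ∈ Set.Ioc p.1 p.2 <;> by_cases h2 : u ∈ Set.Ioc p.2 p.1 <;>
      simp [h1, h2]
  rw [h]
  exact ((integrable_indicator_iff measurableSet_Ioc).2 (L2_integrableOn_Ioc hgm hg2 _ _)).sub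
    ((integrable_indicator_iff measurableSet_Ioc).2 (L2_integrableOn_Ioc hgm hg2 _ _))

include hg2 hgm in
lemma slice_norm_bound (p : ℝ × ℝ) :
    ∫ u, ‖g u * kfun p u‖ ≤ Real.sqrt (∫ u, g u ^ 2) * Real.sqrt |p.2 - p.1| := by
  have hindint : Integrable ((Set.uIoc p.1 p.2).indicator (fun _ => (1:ℝ))) volume :=
    (integrable_indicator_iff measurableSet_uIoc).2
      (integrableOn_const (by rw [volume_uIoc']; exact ENNReal.ofReal_ne_top))
  have hk2int : Integrable (fun u => |kfun p u| ^ 2) volume := by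
    refine Integrable.mono' hindint
      ((measurable_kfun_slice p).abs.pow_const 2).aestronglyMeasurable
      (Filter.Eventually.of_forall fun u => ?_)
    rw [Real.norm_eq_abs, abs_of_nonneg (by positivity), sq_abs]
    exact sq_kfun_le_indicator p u
  have key := my_cs volume (fun u => |g u|) (fun u => |kfun p u|)
    hgm.abs.aestronglyMeasurable (measurable_kfun_slice p).abs.aestronglyMeasurable
    (by simpa [sq_abs] using hg2) hk2int
  have h0 : ∫ u, ‖g u * kfun p u‖ = ∫ u, |g u| * |kfun p u| := by
    congr 1; funext u; rw [Real.norm_eq_abs, abs_mul]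
  have key2 : ∫ u, |g u| * |kfun p u|
      ≤ Real.sqrt (∫ u, |g u| ^ 2) * Real.sqrt (∫ u, |kfun p u| ^ 2) :=
    (le_abs_self _).trans key
  have hb2 : Real.sqrt (∫ u, |kfun p u| ^ 2) ≤ Real.sqrt |p.2 - p.1| := by
    refine Real.sqrt_le_sqrt ?_
    have h1 : ∫ u, |kfun p u| ^ 2 ≤ ∫ u, (Set.uIoc p.1 p.2).indicator (fun _ => (1:ℝ)) u := by
      refine integral_mono hk2int hindint ?_
      intro u
      simpa [sq_abs] using sq_kfun_le_indicator p u
    refine h1.trans ?_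
    rw [integral_indicator_const _ measurableSet_uIoc, measureReal_def, volume_uIoc']
    simp [ENNReal.toReal_ofReal (abs_nonneg _)]
  have ha2 : Real.sqrt (∫ u, |g u| ^ 2) = Real.sqrt (∫ u, g u ^ 2) := by
    congr 1; congr 1; funext u; rw [sq_abs]
  rw [h0]
  calc ∫ u, |g u| * |kfun p u|
      ≤ Real.sqrt (∫ u, |g u| ^ 2) * Real.sqrt (∫ u, |kfun p u| ^ 2) := key2
    _ ≤ Real.sqrt (∫ u, g u ^ 2) * Real.sqrt |p.2 - p.1| := by
        rw [ha2]
        exact mul_le_mul_of_nonneg_left hb2 (Real.sqrt_nonneg _)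

omit [IsFiniteMeasure μ] [IsFiniteMeasure ν] in
include hgm hg2 in
lemma interval_eq_integral (p : ℝ × ℝ) :
    ∫ u in p.1..p.2, g u = ∫ u, g u * kfun p u := by
  rcases le_total p.1 p.2 with h | h
  · have hempty : Set.Ioc p.2 p.1 = ∅ := Set.Ioc_eq_empty (not_lt.2 h)
    have hk : ∀ u, g u * kfun p u = (Set.Ioc p.1 p.2).indicator g u := by
      intro u
      unfold kfun
      rw [hempty]
      by_cases h1 : u ∈ Set.Ioc p.1 p.2 <;> simp [h1]
    rw [intervalIntegral.integral_of_le h]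
    rw [show (fun u => g u * kfun p u) = (Set.Ioc p.1 p.2).indicator g from funext hk]
    rw [integral_indicator measurableSet_Ioc]
  · have hempty : Set.Ioc p.1 p.2 = ∅ := Set.Ioc_eq_empty (not_lt.2 h)
    have hk : ∀ u, g u * kfun p u = -(Set.Ioc p.2 p.1).indicator g u := by
      intro u
      unfold kfun
      rw [hempty]
      by_cases h1 : u ∈ Set.Ioc p.2 p.1 <;> simp [h1]
    rw [intervalIntegral.integral_of_ge h]
    rw [show (fun u => g u * kfun p u) = fun u => -(Set.Ioc p.2 p.1).indicator g u from funext hk]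
    rw [integral_neg, integral_indicator measurableSet_Ioc]

include hπ1 hπ2 hcost hgm hg2 in
lemma prod_integrable :
    Integrable (Function.uncurry fun (p : ℝ × ℝ) (u : ℝ) => g u * kfun p u) (π.prod volume) := by
  haveI := coupling_finite hπ1
  have hmeas : AEStronglyMeasurable
      (Function.uncurry fun (p : ℝ × ℝ) (u : ℝ) => g u * kfun p u) (π.prod volume) := by
    have : Measurable (Function.uncurry fun (p : ℝ × ℝ) (u : ℝ) => g u * kfun p u) :=
      (hgm.comp measurable_snd).mul measurable_kfun
    exact this.aestronglyMeasurable
  rw [integrable_prod_iff hmeas]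
  constructor
  · exact Filter.Eventually.of_forall fun p => slice_integrable hgm hg2 p
  · refine Integrable.mono' ((integrable_sqrt_coupling hπ1 hcost).const_mul
      (Real.sqrt (∫ u, g u ^ 2))) ?_ (Filter.Eventually.of_forall fun p => ?_)
    · exact (hmeas.norm.integral_prod_right')
    · rw [Real.norm_eq_abs, abs_of_nonneg (integral_nonneg fun u => norm_nonneg _)]
      exact slice_norm_bound hgm hg2 p

include hπ1 hπ2 hcost hgm hg2 in
lemma swap_identity :
    ∫ u, g u * Gfun μ ν u = ∫ p, (∫ u in p.1..p.2, g u) ∂π := by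
  haveI := coupling_finite hπ1
  have hint := prod_integrable hπ1 hπ2 hcost hgm hg2
  have hswap := integral_integral_swap hint
  have hleft : ∫ p, (∫ u, g u * kfun p u) ∂π = ∫ p, (∫ u in p.1..p.2, g u) ∂π := by
    congr 1; funext p; rw [interval_eq_integral hgm hg2 p]
  have hright : ∫ u, (∫ p, g u * kfun p u ∂π) = ∫ u, g u * Gfun μ ν u := by
    congr 1; funext u
    rw [integral_const_mul, ← Gfun_eq_integral hπ1 hπ2 u]
  calc ∫ u, g u * Gfun μ ν u = ∫ u, (∫ p, g u * kfun p u ∂π) := hright.symm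
    _ = ∫ p, (∫ u, g u * kfun p u) ∂π := hswap.symm
    _ = ∫ p, (∫ u in p.1..p.2, g u) ∂π := hleft

include hπ1 hπ2 hcost hgm hg2 in
lemma swap_outer_integrable :
    Integrable (fun p : ℝ × ℝ => ∫ u in p.1..p.2, g u) π := by
  haveI := coupling_finite hπ1
  have h := (prod_integrable hπ1 hπ2 hcost hgm hg2).integral_prod_left
  refine h.congr (Filter.Eventually.of_forall fun p => ?_)
  simp only
  exact (interval_eq_integral hgm hg2 p).symm

end Swap

section GL2
variable {μ ν : Measure ℝ} [IsFiniteMeasure μ] [IsFiniteMeasure ν]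
  {π : Measure (ℝ × ℝ)} (hπ1 : π.map Prod.fst = μ) (hπ2 : π.map Prod.snd = ν)
  (hcost : ∫⁻ p, ENNReal.ofReal (|p.1 - p.2| ^ 2) ∂π ≠ ⊤)

include hπ1 hπ2 hcost in
lemma integrable_Gfun_sq : Integrable (fun u => Gfun μ ν u ^ 2) volume := by
  haveI := coupling_finite hπ1
  have hGm := measurable_Gfun μ ν
  have hkm : ∀ u : ℝ, Measurable fun p : ℝ × ℝ => kfun p u := fun u =>
    measurable_kfun.comp (measurable_id.prodMk measurable_const)
  have hunc : Measurable fun q : ℝ × (ℝ × ℝ) => ENNReal.ofReal (kfun q.2 q.1 ^ 2) :=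
    ENNReal.measurable_ofReal.comp ((measurable_kfun.comp measurable_swap).pow_const 2)
  have hpt : ∀ u : ℝ, ENNReal.ofReal (Gfun μ ν u ^ 2)
      ≤ π Set.univ * ∫⁻ p, ENNReal.ofReal (kfun p u ^ 2) ∂π := by
    intro u
    have hki : Integrable (fun p => kfun p u ^ 2) π := by
      refine Integrable.mono' (integrable_const (1:ℝ)) ((hkm u).pow_const 2).aestronglyMeasurable
        (Filter.Eventually.of_forall fun p => ?_)
      rw [Real.norm_eq_abs, abs_of_nonneg (sq_nonneg _)]
      nlinarith [abs_kfun_le p u, abs_nonneg (kfun p u), sq_abs (kfun p u)]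
    have hcs := my_cs π (fun p => kfun p u) (fun _ => (1:ℝ))
      (hkm u).aestronglyMeasurable aestronglyMeasurable_const hki
      (by simpa using integrable_const (1:ℝ))
    have h1 : |Gfun μ ν u| ≤ Real.sqrt (∫ p, kfun p u ^ 2 ∂π)
        * Real.sqrt ((π Set.univ).toReal) := by
      rw [Gfun_eq_integral hπ1 hπ2 u]
      simpa [integral_const, smul_eq_mul, measureReal_def] using hcs
    have hA : 0 ≤ ∫ p, kfun p u ^ 2 ∂π := integral_nonneg fun p => sq_nonneg _
    have hB : (0:ℝ) ≤ (π Set.univ).toReal := ENNReal.toReal_nonneg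
    have h2 : Gfun μ ν u ^ 2 ≤ (∫ p, kfun p u ^ 2 ∂π) * (π Set.univ).toReal := by
      nlinarith [h1, abs_nonneg (Gfun μ ν u), Real.sq_sqrt hA, Real.sq_sqrt hB,
        Real.sqrt_nonneg (∫ p, kfun p u ^ 2 ∂π), Real.sqrt_nonneg ((π Set.univ).toReal),
        sq_abs (Gfun μ ν u)]
    calc ENNReal.ofReal (Gfun μ ν u ^ 2)
        ≤ ENNReal.ofReal ((∫ p, kfun p u ^ 2 ∂π) * (π Set.univ).toReal) :=
          ENNReal.ofReal_le_ofReal h2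
      _ = ENNReal.ofReal (∫ p, kfun p u ^ 2 ∂π) * ENNReal.ofReal ((π Set.univ).toReal) := by
          rw [ENNReal.ofReal_mul hA]
      _ = (∫⁻ p, ENNReal.ofReal (kfun p u ^ 2) ∂π) * π Set.univ := by
          rw [ofReal_integral_eq_lintegral_ofReal hki
            (Filter.Eventually.of_forall fun p => sq_nonneg _),
            ENNReal.ofReal_toReal (measure_ne_top π _)]
      _ = π Set.univ * ∫⁻ p, ENNReal.ofReal (kfun p u ^ 2) ∂π := mul_comm _ _
  have hmeas_inner : Measurable fun u : ℝ => ∫⁻ p, ENNReal.ofReal (kfun p u ^ 2) ∂π :=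
    Measurable.lintegral_prod_right (f := fun (u : ℝ) (p : ℝ × ℝ) =>
      ENNReal.ofReal (kfun p u ^ 2)) hunc
  have hswap : ∫⁻ u, ∫⁻ p, ENNReal.ofReal (kfun p u ^ 2) ∂π
      = ∫⁻ p, (∫⁻ u, ENNReal.ofReal (kfun p u ^ 2)) ∂π :=
    lintegral_lintegral_swap hunc.aemeasurable
  have hinner2 : ∀ p : ℝ × ℝ, ∫⁻ u, ENNReal.ofReal (kfun p u ^ 2)
      ≤ ENNReal.ofReal |p.2 - p.1| := by
    intro p
    have hptw : ∀ u, ENNReal.ofReal (kfun p u ^ 2)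
        ≤ (Set.uIoc p.1 p.2).indicator (fun _ => (1:ℝ≥0∞)) u := by
      intro u
      by_cases h : u ∈ Set.uIoc p.1 p.2
      · rw [Set.indicator_of_mem h]
        rw [ENNReal.ofReal_le_one]
        nlinarith [abs_kfun_le p u, abs_nonneg (kfun p u), sq_abs (kfun p u)]
      · rw [Set.indicator_of_notMem h, kfun_eq_zero p u h]
        simp
    calc ∫⁻ u, ENNReal.ofReal (kfun p u ^ 2)
        ≤ ∫⁻ u, (Set.uIoc p.1 p.2).indicator (fun _ => (1:ℝ≥0∞)) u := lintegral_mono hptw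
      _ = volume (Set.uIoc p.1 p.2) := by
          rw [lintegral_indicator measurableSet_uIoc]
          simp
      _ = ENNReal.ofReal |p.2 - p.1| := volume_uIoc' _ _
  have habs : ∫⁻ p, ENNReal.ofReal |p.2 - p.1| ∂π
      ≤ π Set.univ + ∫⁻ p, ENNReal.ofReal (|p.1 - p.2| ^ 2) ∂π := by
    have hptw : ∀ p : ℝ × ℝ, ENNReal.ofReal |p.2 - p.1|
        ≤ 1 + ENNReal.ofReal (|p.1 - p.2| ^ 2) := by
      intro p
      have hr : |p.2 - p.1| ≤ 1 + |p.1 - p.2| ^ 2 := by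
        rw [abs_sub_comm p.1 p.2]
        nlinarith [sq_nonneg (|p.2 - p.1| - 1), abs_nonneg (p.2 - p.1), sq_abs (p.2 - p.1)]
      calc ENNReal.ofReal |p.2 - p.1| ≤ ENNReal.ofReal (1 + |p.1 - p.2| ^ 2) :=
            ENNReal.ofReal_le_ofReal hr
        _ = 1 + ENNReal.ofReal (|p.1 - p.2| ^ 2) := by
            rw [ENNReal.ofReal_add zero_le_one (by positivity), ENNReal.ofReal_one]
    calc ∫⁻ p, ENNReal.ofReal |p.2 - p.1| ∂π
        ≤ ∫⁻ p, (1 + ENNReal.ofReal (|p.1 - p.2| ^ 2)) ∂π := lintegral_mono hptw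
      _ = π Set.univ + ∫⁻ p, ENNReal.ofReal (|p.1 - p.2| ^ 2) ∂π := by
          rw [lintegral_add_left measurable_const]
          simp
  have hfin : ∫⁻ u, ENNReal.ofReal (Gfun μ ν u ^ 2) < ⊤ := by
    calc ∫⁻ u, ENNReal.ofReal (Gfun μ ν u ^ 2)
        ≤ ∫⁻ u, π Set.univ * ∫⁻ p, ENNReal.ofReal (kfun p u ^ 2) ∂π :=
          lintegral_mono hpt
      _ = π Set.univ * ∫⁻ u, ∫⁻ p, ENNReal.ofReal (kfun p u ^ 2) ∂π :=
          lintegral_const_mul _ hmeas_inner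
      _ = π Set.univ * ∫⁻ p, (∫⁻ u, ENNReal.ofReal (kfun p u ^ 2)) ∂π := by rw [hswap]
      _ ≤ π Set.univ * ∫⁻ p, ENNReal.ofReal |p.2 - p.1| ∂π := by
          exact mul_le_mul_right (lintegral_mono hinner2) _
      _ ≤ π Set.univ * (π Set.univ + ∫⁻ p, ENNReal.ofReal (|p.1 - p.2| ^ 2) ∂π) :=
          mul_le_mul_right habs _
      _ < ⊤ := by
          refine ENNReal.mul_lt_top (measure_lt_top π _) ?_
          exact ENNReal.add_lt_top.2 ⟨measure_lt_top π _, lt_top_iff_ne_top.2 hcost⟩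
  refine ⟨(hGm.pow_const 2).aestronglyMeasurable, ?_⟩
  rw [hasFiniteIntegral_iff_ofReal (Filter.Eventually.of_forall fun u => sq_nonneg _)]
  exact hfin

end GL2

section Main
variable {μ ν : Measure ℝ} [IsFiniteMeasure μ] [IsFiniteMeasure ν]
  {π : Measure (ℝ × ℝ)} (hπ1 : π.map Prod.fst = μ) (hπ2 : π.map Prod.snd = ν)
  (hcost : ∫⁻ p, ENNReal.ofReal (|p.1 - p.2| ^ 2) ∂π ≠ ⊤)
  {ρ₀ : ℝ} (hρ₀ : 0 < ρ₀) (hμ : μ ≤ ENNReal.ofReal ρ₀ • volume)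

include hπ1 hπ2 hcost hρ₀ hμ in
lemma Gnorm_bound :
    Real.sqrt (∫ u, Gfun μ ν u ^ 2) ≤ 2 * Real.sqrt ρ₀
      * Real.sqrt ((∫⁻ p, ENNReal.ofReal (|p.1 - p.2| ^ 2) ∂π).toReal) := by
  haveI := coupling_finite hπ1
  have hGm := measurable_Gfun μ ν
  have hGb := abs_Gfun_le μ ν
  have hG2 : Integrable (fun u => Gfun μ ν u ^ 2) volume := integrable_Gfun_sq hπ1 hπ2 hcost
  set G := Gfun μ ν with hG
  set N2 := ∫ u, G u ^ 2 with hN2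
  have hN2nn : 0 ≤ N2 := integral_nonneg fun u => sq_nonneg _
  set C2 := ∫ p, (p.2 - p.1) ^ 2 ∂π with hC2
  have hC2nn : 0 ≤ C2 := integral_nonneg fun p => sq_nonneg _
  -- identity
  have hswapid := swap_identity hπ1 hπ2 hcost hGm hG2
  have hid : N2 = ∫ p, (∫ u in p.1..p.2, G u) ∂π := by
    rw [hN2, ← hswapid]
    congr 1; funext u; ring
  -- integrabilities over π
  have hIouter := swap_outer_integrable hπ1 hπ2 hcost hGm hG2
  have hGfst_m : Measurable fun p : ℝ × ℝ => G p.1 := hGm.comp measurable_fst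
  set M := (ν Set.univ).toReal + (μ Set.univ).toReal with hM
  have hGfst2 : Integrable (fun p : ℝ × ℝ => G p.1 ^ 2) π := by
    refine Integrable.mono' (integrable_const (M ^ 2))
      ((hGfst_m.pow_const 2).aestronglyMeasurable)
      (Filter.Eventually.of_forall fun p => ?_)
    rw [Real.norm_eq_abs, abs_of_nonneg (sq_nonneg _)]
    have := hGb p.1
    nlinarith [abs_nonneg (G p.1), this, sq_abs (G p.1)]
  have hsqπ : Integrable (fun p : ℝ × ℝ => (p.2 - p.1) ^ 2) π := integrable_sq_coupling hcost
  have hmul : Integrable (fun p : ℝ × ℝ => G p.1 * (p.2 - p.1)) π :=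
    my_int_mul π _ _ hGfst_m.aestronglyMeasurable
      ((measurable_snd.sub measurable_fst)).aestronglyMeasurable hGfst2 hsqπ
  -- monotone bound
  have hmono : N2 ≤ ∫ p, (G p.1 * (p.2 - p.1) + ρ₀ / 2 * (p.2 - p.1) ^ 2) ∂π := by
    rw [hid]
    refine integral_mono hIouter (hmul.add (hsqπ.const_mul (ρ₀ / 2))) ?_
    intro p
    exact intervalIntegral_Gfun_le hρ₀ hμ p.1 p.2
  have hsplit : ∫ p, (G p.1 * (p.2 - p.1) + ρ₀ / 2 * (p.2 - p.1) ^ 2) ∂π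
      = (∫ p, G p.1 * (p.2 - p.1) ∂π) + ρ₀ / 2 * C2 := by
    rw [integral_add hmul (hsqπ.const_mul (ρ₀ / 2)), integral_const_mul]
  -- Cauchy-Schwarz for the cross term
  have hcs := my_cs π (fun p => G p.1) (fun p => p.2 - p.1)
    hGfst_m.aestronglyMeasurable ((measurable_snd.sub measurable_fst)).aestronglyMeasurable
    hGfst2 hsqπ
  -- transfer to μ and bound by ρ₀ N2
  have hmap : ∫ x, G x ^ 2 ∂μ = ∫ p, G p.1 ^ 2 ∂π := by
    rw [← hπ1, integral_map measurable_fst.aemeasurable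
      ((hGm.pow_const 2).aestronglyMeasurable)]
  have hGμ2 : Integrable (fun x => G x ^ 2) μ := by
    refine Integrable.mono' (integrable_const (M ^ 2))
      ((hGm.pow_const 2).aestronglyMeasurable)
      (Filter.Eventually.of_forall fun x => ?_)
    rw [Real.norm_eq_abs, abs_of_nonneg (sq_nonneg _)]
    have := hGb x
    nlinarith [abs_nonneg (G x), this, sq_abs (G x)]
  have hmu_le : ∫ x, G x ^ 2 ∂μ ≤ ρ₀ * N2 := by
    have h1 : ENNReal.ofReal (∫ x, G x ^ 2 ∂μ) = ∫⁻ x, ENNReal.ofReal (G x ^ 2) ∂μ :=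
      ofReal_integral_eq_lintegral_ofReal hGμ2 (Filter.Eventually.of_forall fun x => sq_nonneg _)
    have h3 : ENNReal.ofReal N2 = ∫⁻ x, ENNReal.ofReal (G x ^ 2) ∂volume :=
      ofReal_integral_eq_lintegral_ofReal hG2 (Filter.Eventually.of_forall fun x => sq_nonneg _)
    have h2 : ∫⁻ x, ENNReal.ofReal (G x ^ 2) ∂μ
        ≤ ENNReal.ofReal ρ₀ * ∫⁻ x, ENNReal.ofReal (G x ^ 2) ∂volume := by
      calc ∫⁻ x, ENNReal.ofReal (G x ^ 2) ∂μ
          ≤ ∫⁻ x, ENNReal.ofReal (G x ^ 2) ∂(ENNReal.ofReal ρ₀ • volume) :=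
            lintegral_mono' hμ le_rfl
        _ = ENNReal.ofReal ρ₀ * ∫⁻ x, ENNReal.ofReal (G x ^ 2) ∂volume :=
            lintegral_smul_measure _ _
    have h4 : ENNReal.ofReal (∫ x, G x ^ 2 ∂μ) ≤ ENNReal.ofReal (ρ₀ * N2) := by
      rw [h1, ENNReal.ofReal_mul hρ₀.le, h3]
      exact h2
    have h5 := ENNReal.toReal_mono ENNReal.ofReal_ne_top h4
    rw [ENNReal.toReal_ofReal (integral_nonneg fun x => sq_nonneg _),
      ENNReal.toReal_ofReal (by positivity)] at h5
    exact h5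
  -- assemble the quadratic inequality
  set N := Real.sqrt N2 with hN
  set C := Real.sqrt C2 with hC
  have hNnn : 0 ≤ N := Real.sqrt_nonneg _
  have hCnn : 0 ≤ C := Real.sqrt_nonneg _
  have hNsq : N ^ 2 = N2 := Real.sq_sqrt hN2nn
  have hCsq : C ^ 2 = C2 := Real.sq_sqrt hC2nn
  have hcross : ∫ p, G p.1 * (p.2 - p.1) ∂π ≤ Real.sqrt ρ₀ * N * C := by
    have h6 : Real.sqrt (∫ p, G p.1 ^ 2 ∂π) ≤ Real.sqrt ρ₀ * N := by
      rw [← hmap]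
      calc Real.sqrt (∫ x, G x ^ 2 ∂μ) ≤ Real.sqrt (ρ₀ * N2) := Real.sqrt_le_sqrt hmu_le
        _ = Real.sqrt ρ₀ * N := by rw [Real.sqrt_mul hρ₀.le, hN]
    calc ∫ p, G p.1 * (p.2 - p.1) ∂π ≤ |∫ p, G p.1 * (p.2 - p.1) ∂π| := le_abs_self _
      _ ≤ Real.sqrt (∫ p, G p.1 ^ 2 ∂π) * Real.sqrt C2 := hcs
      _ ≤ Real.sqrt ρ₀ * N * C := by
          rw [← hC]
          exact mul_le_mul_of_nonneg_right h6 hCnn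
  have hquad : N ^ 2 ≤ Real.sqrt ρ₀ * N * C + ρ₀ / 2 * C ^ 2 := by
    rw [hNsq, hCsq]
    calc N2 ≤ _ := hmono
      _ = _ := hsplit
      _ ≤ Real.sqrt ρ₀ * N * C + ρ₀ / 2 * C2 := by
          exact add_le_add hcross le_rfl
  have hs : Real.sqrt ρ₀ ^ 2 = ρ₀ := Real.sq_sqrt hρ₀.le
  have hsnn : 0 ≤ Real.sqrt ρ₀ := Real.sqrt_nonneg _
  have hfinalN : N ≤ 2 * Real.sqrt ρ₀ * C := by
    nlinarith [hquad, sq_nonneg (N - 2 * Real.sqrt ρ₀ * C), mul_nonneg hsnn hCnn,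
      mul_nonneg (mul_nonneg hsnn hsnn) (mul_nonneg hCnn hCnn), sq_nonneg N, sq_nonneg C]
  -- rewrite C as sqrt of toReal of the cost
  have hC2eq : C2 = (∫⁻ p, ENNReal.ofReal (|p.1 - p.2| ^ 2) ∂π).toReal := by
    have h7 : ENNReal.ofReal C2 = ∫⁻ p, ENNReal.ofReal ((p.2 - p.1) ^ 2) ∂π :=
      ofReal_integral_eq_lintegral_ofReal hsqπ (Filter.Eventually.of_forall fun p => sq_nonneg _)
    have h8 : (∫⁻ p, ENNReal.ofReal ((p.2 - p.1) ^ 2) ∂π)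
        = ∫⁻ p, ENNReal.ofReal (|p.1 - p.2| ^ 2) ∂π := by
      refine lintegral_congr fun p => ?_
      congr 1
      rw [sq_abs]
      ring
    rw [← h8, ← h7, ENNReal.toReal_ofReal hC2nn]
  calc Real.sqrt N2 = N := rfl
    _ ≤ 2 * Real.sqrt ρ₀ * C := hfinalN
    _ = _ := by rw [hC, hC2eq]

end Main

section Delta
variable {μ ν : Measure ℝ} [IsFiniteMeasure μ] [IsFiniteMeasure ν]
  {π : Measure (ℝ × ℝ)} (hπ1 : π.map Prod.fst = μ) (hπ2 : π.map Prod.snd = ν)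
  (hcost : ∫⁻ p, ENNReal.ofReal (|p.1 - p.2| ^ 2) ∂π ≠ ⊤)
  {ρ₀ : ℝ} (hρ₀ : 0 < ρ₀) (hμ : μ ≤ ENNReal.ofReal ρ₀ • volume)
  {f : ℝ → ℝ} {Cb : ℝ} (hfb : ∀ x, |f x| ≤ Cb) (hf1 : ContDiff ℝ 1 f)
  (hfL2 : ∫⁻ x, ENNReal.ofReal (|deriv f x| ^ 2) ≤ 1)

include hf1 hfL2 in
lemma deriv_sq_integrable : Integrable (fun u => deriv f u ^ 2) volume := by
  have hd : Continuous (deriv f) := hf1.continuous_deriv le_rfl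
  refine ⟨(hd.measurable.pow_const 2).aestronglyMeasurable, ?_⟩
  rw [hasFiniteIntegral_iff_ofReal (Filter.Eventually.of_forall fun u => sq_nonneg _)]
  have heq : (fun u => ENNReal.ofReal (deriv f u ^ 2))
      = fun u => ENNReal.ofReal (|deriv f u| ^ 2) := by
    funext u; rw [sq_abs]
  rw [heq]
  exact lt_of_le_of_lt hfL2 ENNReal.one_lt_top

include hπ1 hπ2 hcost hfb hf1 hfL2 in
lemma delta_eq : (∫ x, f x ∂ν) - ∫ x, f x ∂μ = ∫ u, deriv f u * Gfun μ ν u := by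
  haveI := coupling_finite hπ1
  have hfc : Continuous f := hf1.continuous
  have h1 : ∫ x, f x ∂ν = ∫ p, f p.2 ∂π := by
    rw [← hπ2, integral_map measurable_snd.aemeasurable]
    rw [← hπ2] at *
    exact hfc.aestronglyMeasurable
  have h2 : ∫ x, f x ∂μ = ∫ p, f p.1 ∂π := by
    rw [← hπ1, integral_map measurable_fst.aemeasurable]
    exact hfc.aestronglyMeasurable
  have hi2 : Integrable (fun p : ℝ × ℝ => f p.2) π := by
    refine Integrable.mono' (integrable_const Cb)
      (hfc.comp continuous_snd).aestronglyMeasurable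
      (Filter.Eventually.of_forall fun p => ?_)
    rw [Real.norm_eq_abs]; exact hfb p.2
  have hi1 : Integrable (fun p : ℝ × ℝ => f p.1) π := by
    refine Integrable.mono' (integrable_const Cb)
      (hfc.comp continuous_fst).aestronglyMeasurable
      (Filter.Eventually.of_forall fun p => ?_)
    rw [Real.norm_eq_abs]; exact hfb p.1
  have h3 : (∫ x, f x ∂ν) - ∫ x, f x ∂μ = ∫ p, (f p.2 - f p.1) ∂π := by
    rw [h1, h2, ← integral_sub hi2 hi1]
  have hftc : ∀ p : ℝ × ℝ, f p.2 - f p.1 = ∫ u in p.1..p.2, deriv f u := by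
    intro p
    rw [intervalIntegral.integral_deriv_eq_sub
      (fun x _ => (hf1.differentiable one_ne_zero x))
      (((hf1.continuous_deriv le_rfl)).intervalIntegrable _ _)]
  have hswap := swap_identity hπ1 hπ2 hcost (hf1.continuous_deriv le_rfl).measurable
    (deriv_sq_integrable hf1 hfL2)
  rw [h3, hswap]
  congr 1; funext p; exact hftc p

include hπ1 hπ2 hcost hρ₀ hμ hfb hf1 hfL2 in
lemma key_real :
    |(∫ x, f x ∂ν) - ∫ x, f x ∂μ| ≤ 2 * Real.sqrt ρ₀
      * Real.sqrt ((∫⁻ p, ENNReal.ofReal (|p.1 - p.2| ^ 2) ∂π).toReal) := by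
  rw [delta_eq hπ1 hπ2 hcost hfb hf1 hfL2]
  have hD2 : Integrable (fun u => deriv f u ^ 2) volume := deriv_sq_integrable hf1 hfL2
  have hG2 : Integrable (fun u => Gfun μ ν u ^ 2) volume := integrable_Gfun_sq hπ1 hπ2 hcost
  have hcs := my_cs volume (deriv f) (Gfun μ ν)
    (hf1.continuous_deriv le_rfl).measurable.aestronglyMeasurable
    (measurable_Gfun μ ν).aestronglyMeasurable hD2 hG2
  have hD2le1 : ∫ u, deriv f u ^ 2 ≤ 1 := by
    have h1 : ENNReal.ofReal (∫ u, deriv f u ^ 2) = ∫⁻ u, ENNReal.ofReal (deriv f u ^ 2) :=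
      ofReal_integral_eq_lintegral_ofReal hD2 (Filter.Eventually.of_forall fun u => sq_nonneg _)
    have heq : (fun u => ENNReal.ofReal (deriv f u ^ 2))
        = fun u => ENNReal.ofReal (|deriv f u| ^ 2) := by
      funext u; rw [sq_abs]
    rw [heq] at h1
    have h2 : ENNReal.ofReal (∫ u, deriv f u ^ 2) ≤ ENNReal.ofReal 1 := by
      rw [h1, ENNReal.ofReal_one]; exact hfL2
    exact (ENNReal.ofReal_le_ofReal_iff zero_le_one).1 h2
  calc |∫ u, deriv f u * Gfun μ ν u|
      ≤ Real.sqrt (∫ u, deriv f u ^ 2) * Real.sqrt (∫ u, Gfun μ ν u ^ 2) := hcs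
    _ ≤ 1 * Real.sqrt (∫ u, Gfun μ ν u ^ 2) := by
        refine mul_le_mul_of_nonneg_right ?_ (Real.sqrt_nonneg _)
        exact Real.sqrt_le_one.mpr hD2le1
    _ = Real.sqrt (∫ u, Gfun μ ν u ^ 2) := one_mul _
    _ ≤ _ := Gnorm_bound hπ1 hπ2 hcost hρ₀ hμ

end Delta


end Aux

/-- The homogeneous Sobolev norm `‖ν − μ‖_{Ḣ⁻¹(lam)}` on `ℝ` of the difference of two
finite positive Borel measures `μ, ν`, with respect to a base measure `lam`:
the supremum of `|∫ f dν − ∫ f dμ|` over bounded `C¹` functions `f : ℝ → ℝ` with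
`∫ |f'|² dlam ≤ 1`. -/
noncomputable def HminusOneDiffReal (lam μ ν : Measure ℝ) : ℝ≥0∞ :=
  ⨆ f ∈ {f : ℝ → ℝ |
      (∃ C, ∀ x, |f x| ≤ C) ∧ ContDiff ℝ 1 f ∧
      ∫⁻ x, ENNReal.ofReal (|deriv f x| ^ 2) ∂lam ≤ 1},
    ENNReal.ofReal |(∫ x, f x ∂ν) - ∫ x, f x ∂μ|

/-- The quadratic Wasserstein distance `W₂(μ,ν)` on `ℝ`, valued in `[0,∞]`. -/
noncomputable def W2Real (μ ν : Measure ℝ) : ℝ≥0∞ :=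
  (⨅ π ∈ {π : Measure (ℝ × ℝ) | π.map Prod.fst = μ ∧ π.map Prod.snd = ν},
    ∫⁻ p, ENNReal.ofReal (|p.1 - p.2| ^ 2) ∂π) ^ (1/2 : ℝ)

/-- On `ℝ`, if `μ ≤ ρ₀·λ` with `ρ₀ > 0` (no upper density bound on `ν`), and `μ, ν` are
finite measures with the same total mass, then `‖ν − μ‖_{Ḣ⁻¹} ≤ 2√ρ₀ · W₂(μ, ν)`. -/
theorem HminusOne_le_W2_dimension_one (μ ν : Measure ℝ)
    [IsFiniteMeasure μ] [IsFiniteMeasure ν] (hmass : μ Set.univ = ν Set.univ)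
    (ρ₀ : ℝ) (hρ₀ : 0 < ρ₀) (hμ : μ ≤ ENNReal.ofReal ρ₀ • volume) :
    HminusOneDiffReal volume μ ν ≤ ENNReal.ofReal (2 * Real.sqrt ρ₀) * W2Real μ ν := by
  open Set in
  rw [HminusOneDiffReal, W2Real]
  set c := ENNReal.ofReal (2 * Real.sqrt ρ₀) with hc
  have hcpos : (0:ℝ) < 2 * Real.sqrt ρ₀ := by positivity
  have hc0 : c ≠ 0 := by
    rw [hc]
    simp only [ne_eq, ENNReal.ofReal_eq_zero, not_le]
    exact hcpos
  have hcT : c ≠ ⊤ := ENNReal.ofReal_ne_top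
  refine iSup₂_le fun f hf => ?_
  obtain ⟨⟨Cb, hfb⟩, hf1, hfL2⟩ := hf
  set a := ENNReal.ofReal |(∫ x, f x ∂ν) - ∫ x, f x ∂μ| with ha
  -- per-coupling bound
  have key : ∀ π ∈ {π : Measure (ℝ × ℝ) | π.map Prod.fst = μ ∧ π.map Prod.snd = ν},
      a ≤ c * (∫⁻ p, ENNReal.ofReal (|p.1 - p.2| ^ 2) ∂π) ^ (1/2 : ℝ) := by
    rintro π ⟨hπ1, hπ2⟩
    by_cases hcost : ∫⁻ p, ENNReal.ofReal (|p.1 - p.2| ^ 2) ∂π = ⊤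
    · rw [hcost, ENNReal.top_rpow_of_pos (by norm_num), ENNReal.mul_top hc0]
      exact le_top
    · have hreal := key_real hπ1 hπ2 hcost hρ₀ hμ hfb hf1 hfL2
      have h1 : a ≤ ENNReal.ofReal (2 * Real.sqrt ρ₀
          * Real.sqrt ((∫⁻ p, ENNReal.ofReal (|p.1 - p.2| ^ 2) ∂π).toReal)) :=
        ENNReal.ofReal_le_ofReal hreal
      refine h1.trans ?_
      rw [ENNReal.ofReal_mul hcpos.le]
      refine mul_le_mul_right ?_ c
      -- ofReal (sqrt t.toReal) = (ofReal t.toReal)^(1/2) = t^(1/2)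
      rw [Real.sqrt_eq_rpow, ← ENNReal.ofReal_rpow_of_nonneg ENNReal.toReal_nonneg (by norm_num),
        ENNReal.ofReal_toReal hcost]
  -- combine over the infimum
  by_cases hne : {π : Measure (ℝ × ℝ) | π.map Prod.fst = μ ∧ π.map Prod.snd = ν} = ∅
  · rw [hne]
    simp only [Set.mem_empty_iff_false, iInf_false, iInf_top]
    rw [ENNReal.top_rpow_of_pos (by norm_num), ENNReal.mul_top hc0]
    exact le_top
  · have hdiv : ∀ π ∈ {π : Measure (ℝ × ℝ) | π.map Prod.fst = μ ∧ π.map Prod.snd = ν},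
        (a / c) ^ (2:ℝ) ≤ ∫⁻ p, ENNReal.ofReal (|p.1 - p.2| ^ 2) ∂π := by
      intro π hπ
      have h2 : a / c ≤ (∫⁻ p, ENNReal.ofReal (|p.1 - p.2| ^ 2) ∂π) ^ (1/2 : ℝ) :=
        ENNReal.div_le_of_le_mul ((key π hπ).trans_eq (mul_comm _ _))
      calc (a / c) ^ (2:ℝ)
          ≤ ((∫⁻ p, ENNReal.ofReal (|p.1 - p.2| ^ 2) ∂π) ^ (1/2 : ℝ)) ^ (2:ℝ) :=
            ENNReal.rpow_le_rpow h2 (by norm_num)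
        _ = _ := by
            rw [← ENNReal.rpow_mul]
            norm_num
    have h3 : (a / c) ^ (2:ℝ)
        ≤ ⨅ π ∈ {π : Measure (ℝ × ℝ) | π.map Prod.fst = μ ∧ π.map Prod.snd = ν},
          ∫⁻ p, ENNReal.ofReal (|p.1 - p.2| ^ 2) ∂π := le_iInf₂ hdiv
    have h4 : a / c ≤ (⨅ π ∈ {π : Measure (ℝ × ℝ) | π.map Prod.fst = μ ∧ π.map Prod.snd = ν},
        ∫⁻ p, ENNReal.ofReal (|p.1 - p.2| ^ 2) ∂π) ^ (1/2 : ℝ) := by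
      calc a / c = ((a / c) ^ (2:ℝ)) ^ (1/2:ℝ) := by
            rw [← ENNReal.rpow_mul]
            norm_num
        _ ≤ _ := ENNReal.rpow_le_rpow h3 (by norm_num)
    calc a = a / c * c := by rw [ENNReal.div_mul_cancel hc0 hcT]
      _ ≤ _ * c := mul_le_mul_left h4 c
      _ = _ := mul_comm _ _
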